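/- Let N be a positive integer and set μ* := F̃_N(y*). Then μ* > 0, and for every real μ > 0: the equation F̃_N(y) = μ has no solution y ∈ (0,1) if μ > μ*; exactly one solution y ∈ (0,1) if μ = μ*; and exactly two solutions y ∈ (0,1) if 0 < μ < μ*. -/

import Mathlib

/-- The polynomial `p_N(y) = 1 - (N+1)² y^N + N(2N+3) y^{N+1} - N(N+1) y^{N+2}`. -/
noncomputable def pN (N : ℕ) (y : ℝ) : ℝ :=
  1 - ((N : ℝ) + 1) ^ 2 * y ^ N + (N : ℝ) * (2 * (N : ℝ) + 3) * y ^ (N + 1)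
    - (N : ℝ) * ((N : ℝ) + 1) * y ^ (N + 2)

/-- The bifurcation function `F̃_N(y) = (y/(1-y)) (1 - (N+1) y^N + N y^{N+1})`. -/
noncomputable def Ftilde (N : ℕ) (y : ℝ) : ℝ :=
  (y / (1 - y)) * (1 - ((N : ℝ) + 1) * y ^ N + (N : ℝ) * y ^ (N + 1))

/-- With `μ* := F̃_N(y*)` one has `μ* > 0`, and for `μ > 0` the equation `F̃_N(y) = μ` has
no solution in `(0,1)` if `μ > μ*`, exactly one if `μ = μ*`, exactly two if `0 < μ < μ*`. -/

noncomputable def Gfun (N : ℕ) (y : ℝ) : ℝ :=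
  (∑ k ∈ Finset.range N, y ^ (k + 1)) - (N : ℝ) * y ^ (N + 1)

noncomputable def Dfun (N : ℕ) (y : ℝ) : ℝ :=
  (∑ k ∈ Finset.range N, ((k : ℝ) + 1) * y ^ k) - (N : ℝ) * ((N : ℝ) + 1) * y ^ N

lemma sumA (N : ℕ) (y : ℝ) : (1 - y) * ∑ k ∈ Finset.range N, y ^ k = 1 - y ^ N := by
  have h := geom_sum_mul y N
  nlinarith [h]

lemma sumB (N : ℕ) (y : ℝ) :
    (1 - y) * ∑ k ∈ Finset.range N, ((k : ℝ) + 1) * y ^ k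
      = (∑ k ∈ Finset.range N, y ^ k) - (N : ℝ) * y ^ N := by
  induction N with
  | zero => simp
  | succ n ih =>
    rw [Finset.sum_range_succ, Finset.sum_range_succ]
    push_cast
    linear_combination ih


lemma FtG (N : ℕ) (y : ℝ) (hy : y ∈ Set.Ioo (0:ℝ) 1) : Ftilde N y = Gfun N y := by
  have h1 : (1:ℝ) - y ≠ 0 := by have := hy.2; intro h; linarith
  have hA := sumA N y
  have key : 1 - ((N : ℝ) + 1) * y ^ N + (N : ℝ) * y ^ (N + 1)
      = (1 - y) * ((∑ k ∈ Finset.range N, y ^ k) - (N : ℝ) * y ^ N) := by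
    rw [mul_sub, hA]; ring
  have hsum : y * ∑ k ∈ Finset.range N, y ^ k = ∑ k ∈ Finset.range N, y ^ (k + 1) := by
    rw [Finset.mul_sum]
    exact Finset.sum_congr rfl fun k _ => by ring
  rw [Ftilde, key, Gfun, ← hsum]
  field_simp
  ring

lemma pND (N : ℕ) (y : ℝ) : pN N y = (1 - y) ^ 2 * Dfun N y := by
  have hA := sumA N y
  have hB := sumB N y
  have : (1 - y) ^ 2 * ∑ k ∈ Finset.range N, ((k : ℝ) + 1) * y ^ k
      = (1 - y^N) - (N : ℝ) * y ^ N * (1 - y) := by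
    rw [sq, mul_assoc, hB, mul_sub, hA]; ring
  rw [pN, Dfun, mul_sub, this]
  ring

lemma hasDerivG (N : ℕ) (y : ℝ) : HasDerivAt (Gfun N) (Dfun N y) y := by
  have h1 : HasDerivAt (fun x : ℝ => ∑ k ∈ Finset.range N, x ^ (k + 1))
      (∑ k ∈ Finset.range N, ((k : ℝ) + 1) * y ^ k) y := by
    refine HasDerivAt.fun_sum fun k _ => ?_
    have := hasDerivAt_pow (k + 1) y
    simpa using this
  have h2 : HasDerivAt (fun x : ℝ => (N : ℝ) * x ^ (N + 1))
      ((N : ℝ) * ((N : ℝ) + 1) * y ^ N) y := by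
    have := (hasDerivAt_pow (N + 1) y).const_mul (N : ℝ)
    simpa [mul_assoc] using this
  exact h1.fun_sub h2

lemma contG (N : ℕ) : Continuous (Gfun N) :=
  continuous_iff_continuousAt.2 fun y => (hasDerivG N y).differentiableAt.continuousAt

lemma contD (N : ℕ) : Continuous (Dfun N) := by
  unfold Dfun; fun_prop

lemma G0 (N : ℕ) : Gfun N 0 = 0 := by simp [Gfun]

lemma G1 (N : ℕ) : Gfun N 1 = 0 := by simp [Gfun]

lemma D0 (N : ℕ) (hN : 1 ≤ N) : Dfun N 0 = 1 := by
  rw [Dfun, Finset.sum_eq_single_of_mem 0 (Finset.mem_range.2 hN)]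
  · simp [zero_pow (by omega : N ≠ 0)]
  · intro k _ hk; simp [zero_pow hk]

lemma D1 (N : ℕ) (hN : 1 ≤ N) : Dfun N 1 < 0 := by
  have hs : ∀ m : ℕ, ∑ k ∈ Finset.range m, ((k : ℝ) + 1) = (m : ℝ) * ((m : ℝ) + 1) / 2 := by
    intro m
    induction m with
    | zero => simp
    | succ n ih =>
      rw [Finset.sum_range_succ, ih]
      push_cast; ring
  have : Dfun N 1 = (N:ℝ) * ((N:ℝ)+1)/2 - (N:ℝ)*((N:ℝ)+1) := by
    simp [Dfun, hs N]
  rw [this]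
  have h1 : (1:ℝ) ≤ (N:ℝ) := by exact_mod_cast hN
  nlinarith

theorem stmt7 (N : ℕ) (hN : 1 ≤ N) (ystar : ℝ) (hmem : ystar ∈ Set.Ioo (0 : ℝ) 1)
    (hzero : pN N ystar = 0)
    (huniq : ∀ y ∈ Set.Ioo (0 : ℝ) 1, pN N y = 0 → y = ystar) :
    0 < Ftilde N ystar ∧
    ∀ μ : ℝ, 0 < μ →
      ((Ftilde N ystar < μ → ¬ ∃ y ∈ Set.Ioo (0 : ℝ) 1, Ftilde N y = μ) ∧
       (μ = Ftilde N ystar → ∃! y : ℝ, y ∈ Set.Ioo (0 : ℝ) 1 ∧ Ftilde N y = μ) ∧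
       (μ < Ftilde N ystar →
         ∃ y₁ y₂ : ℝ, y₁ ≠ y₂ ∧
           (y₁ ∈ Set.Ioo (0 : ℝ) 1 ∧ Ftilde N y₁ = μ) ∧
           (y₂ ∈ Set.Ioo (0 : ℝ) 1 ∧ Ftilde N y₂ = μ) ∧
           ∀ y ∈ Set.Ioo (0 : ℝ) 1, Ftilde N y = μ → y = y₁ ∨ y = y₂)) := by
  obtain ⟨hy0, hy1⟩ := hmem
  -- D is nonzero off ystar in (0,1)
  have hDne : ∀ y ∈ Set.Ioo (0:ℝ) 1, y ≠ ystar → Dfun N y ≠ 0 := by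
    intro y hy hne hD
    exact hne (huniq y hy (by rw [pND, hD, mul_zero]))
  -- D > 0 on (0, ystar)
  have hDpos : ∀ y ∈ Set.Ioo (0:ℝ) ystar, 0 < Dfun N y := by
    intro y ⟨h0, h1⟩
    by_contra h
    push_neg at h
    have hne : Dfun N y ≠ 0 := hDne y ⟨h0, h1.trans hy1⟩ (ne_of_lt h1)
    have hlt : Dfun N y < 0 := lt_of_le_of_ne h hne
    have : (0:ℝ) ∈ Dfun N '' Set.Ioo 0 y := by
      apply intermediate_value_Ioo' (le_of_lt h0) (contD N).continuousOn
      rw [D0 N hN]; exact ⟨hlt, one_pos⟩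
    obtain ⟨c, hc, hc0⟩ := this
    exact hDne c ⟨hc.1, hc.2.trans (h1.trans hy1)⟩ (ne_of_lt (hc.2.trans h1)) hc0
  -- D < 0 on (ystar, 1)
  have hDneg : ∀ y ∈ Set.Ioo ystar (1:ℝ), Dfun N y < 0 := by
    intro y ⟨h0, h1⟩
    by_contra h
    push_neg at h
    have hne : Dfun N y ≠ 0 := hDne y ⟨hy0.trans h0, h1⟩ (ne_of_gt h0)
    have hgt : 0 < Dfun N y := lt_of_le_of_ne h (Ne.symm hne)
    have : (0:ℝ) ∈ Dfun N '' Set.Ioo y 1 := by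
      apply intermediate_value_Ioo' (le_of_lt h1) (contD N).continuousOn
      exact ⟨D1 N hN, hgt⟩
    obtain ⟨c, hc, hc0⟩ := this
    exact hDne c ⟨hy0.trans (h0.trans hc.1), hc.2⟩ (ne_of_gt (h0.trans hc.1)) hc0
  -- monotonicity
  have hMono : StrictMonoOn (Gfun N) (Set.Icc 0 ystar) := by
    apply strictMonoOn_of_deriv_pos (convex_Icc _ _) (contG N).continuousOn
    intro x hx
    rw [interior_Icc] at hx
    rw [(hasDerivG N x).deriv]
    exact hDpos x hx
  have hAnti : StrictAntiOn (Gfun N) (Set.Icc ystar 1) := by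
    apply strictAntiOn_of_deriv_neg (convex_Icc _ _) (contG N).continuousOn
    intro x hx
    rw [interior_Icc] at hx
    rw [(hasDerivG N x).deriv]
    exact hDneg x hx
  set M := Gfun N ystar with hM
  have hFty : Ftilde N ystar = M := FtG N ystar ⟨hy0, hy1⟩
  have hMpos : 0 < M := by
    have := hMono (Set.left_mem_Icc.2 (le_of_lt hy0)) ⟨le_of_lt hy0, le_refl _⟩ hy0
    rwa [G0] at this
  -- every other point has strictly smaller G value
  have hlt : ∀ y ∈ Set.Ioo (0:ℝ) 1, y ≠ ystar → Gfun N y < M := by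
    intro y ⟨h0, h1⟩ hne
    rcases lt_or_gt_of_ne hne with h | h
    · exact hMono ⟨le_of_lt h0, le_of_lt h⟩ ⟨le_of_lt hy0, le_refl _⟩ h
    · exact hAnti ⟨le_refl _, le_of_lt hy1⟩ ⟨le_of_lt h, le_of_lt h1⟩ h
  refine ⟨hFty ▸ hMpos, fun μ hμ => ⟨?_, ?_, ?_⟩⟩
  · -- no solutions for μ > M
    rw [hFty]
    rintro hMμ ⟨y, hy, hFy⟩
    rw [FtG N y hy] at hFy
    rcases eq_or_ne y ystar with rfl | hne
    · exact absurd hFy.symm (ne_of_gt hMμ)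
    · exact absurd hFy (ne_of_lt ((hlt y hy hne).trans hMμ))
  · -- exactly one for μ = M
    rw [hFty]
    rintro rfl
    refine ⟨ystar, ⟨⟨hy0, hy1⟩, hFty⟩, ?_⟩
    rintro y ⟨hy, hFy⟩
    by_contra hne
    rw [FtG N y hy] at hFy
    exact absurd hFy (ne_of_lt (hlt y hy hne))
  · -- exactly two for 0 < μ < M
    rw [hFty]
    intro hμM
    have h1 : μ ∈ Gfun N '' Set.Ioo 0 ystar := by
      apply intermediate_value_Ioo (le_of_lt hy0) (contG N).continuousOn
      rw [G0]; exact ⟨hμ, hμM⟩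
    have h2 : μ ∈ Gfun N '' Set.Ioo ystar 1 := by
      apply intermediate_value_Ioo' (le_of_lt hy1) (contG N).continuousOn
      rw [G1]; exact ⟨hμ, hμM⟩
    obtain ⟨y₁, hy₁, hG₁⟩ := h1
    obtain ⟨y₂, hy₂, hG₂⟩ := h2
    have hy₁' : y₁ ∈ Set.Ioo (0:ℝ) 1 := ⟨hy₁.1, hy₁.2.trans hy1⟩
    have hy₂' : y₂ ∈ Set.Ioo (0:ℝ) 1 := ⟨hy0.trans hy₂.1, hy₂.2⟩
    refine ⟨y₁, y₂, ne_of_lt (hy₁.2.trans hy₂.1), ⟨hy₁', (FtG N y₁ hy₁').trans hG₁⟩,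
      ⟨hy₂', (FtG N y₂ hy₂').trans hG₂⟩, ?_⟩
    intro y hy hFy
    rw [FtG N y hy] at hFy
    have hne : y ≠ ystar := by
      rintro rfl; exact absurd hFy (ne_of_gt hμM)
    rcases lt_or_gt_of_ne hne with h | h
    · left
      exact hMono.injOn ⟨le_of_lt hy.1, le_of_lt h⟩ ⟨le_of_lt hy₁.1, le_of_lt hy₁.2⟩
        (hFy.trans hG₁.symm)
    · right
      exact hAnti.injOn ⟨le_of_lt h, le_of_lt hy.2⟩ ⟨le_of_lt hy₂.1, le_of_lt hy₂.2⟩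
        (hFy.trans hG₂.symm)
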